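/- Let A ∈ ℂ^{n×n} and λ an eigenvalue of A. Suppose u₁,…,u_p is a left Jordan chain for λ and v₁,…,v_q is a right Jordan chain for λ. Then u_i*v_j = 0 whenever 2 ≤ i + j ≤ max(p,q). -/

import Mathlib

open Matrix

/-- Generalized biorthogonality, same eigenvalue: `uᵢ* vⱼ = 0` for
`2 ≤ i + j ≤ max p q`. -/
theorem generalized_biorthogonality_vanish {n p q : ℕ}
    (A : Matrix (Fin n) (Fin n) ℂ) (lam : ℂ)
    (u v : ℕ → Fin n → ℂ)
    (hp : 1 ≤ p) (hq : 1 ≤ q)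
    (hu0 : u 1 ≠ 0) (hv0 : v 1 ≠ 0)
    (hu1 : Matrix.vecMul (star (u 1)) A = lam • star (u 1))
    (huS : ∀ i, 1 ≤ i → i + 1 ≤ p →
      Matrix.vecMul (star (u (i + 1))) A = lam • star (u (i + 1)) + star (u i))
    (hv1 : A.mulVec (v 1) = lam • v 1)
    (hvS : ∀ j, 1 ≤ j → j + 1 ≤ q →
      A.mulVec (v (j + 1)) = lam • v (j + 1) + v j) :
    ∀ i j, 1 ≤ i → i ≤ p → 1 ≤ j → j ≤ q → i + j ≤ max p q →
      dotProduct (star (u i)) (v j) = 0 := by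
  set S : ℕ → ℕ → ℂ := fun i j => dotProduct (star (u i)) (v j) with hS
  -- first column vanishes
  have L1 : ∀ i, 1 ≤ i → i + 1 ≤ p → S i 1 = 0 := by
    intro i hi hip
    have h := congrArg (fun w => dotProduct w (v 1)) (huS i hi hip)
    simp only [← Matrix.dotProduct_mulVec, hv1, add_dotProduct,
      smul_dotProduct, dotProduct_smul] at h
    simpa [hS, smul_eq_mul] using h
  -- first row vanishes
  have L2 : ∀ j, 1 ≤ j → j + 1 ≤ q → S 1 j = 0 := by
    intro j hj hjq
    have h := congrArg (fun w => dotProduct (star (u 1)) w)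
      (hvS j hj hjq)
    beta_reduce at h
    rw [show (dotProduct (star (u 1)) (A.mulVec (v (j+1)))
        = dotProduct (Matrix.vecMul (star (u 1)) A) (v (j+1)))
      from Matrix.dotProduct_mulVec _ _ _, hu1] at h
    simp only [smul_dotProduct, dotProduct_add,
      dotProduct_smul] at h
    simpa [hS, smul_eq_mul] using h
  -- exchange identity
  have exch : ∀ i j, 1 ≤ i → i + 1 ≤ p → 1 ≤ j → j + 1 ≤ q →
      S (i+1) j = S i (j+1) := by
    intro i j hi hip hj hjq
    have h1 : dotProduct (star (u (i+1))) (A.mulVec (v (j+1)))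
        = lam * S (i+1) (j+1) + S (i+1) j := by
      rw [hvS j hj hjq]
      simp [hS, dotProduct_add, dotProduct_smul, smul_eq_mul]
    have h2 : dotProduct (star (u (i+1))) (A.mulVec (v (j+1)))
        = lam * S (i+1) (j+1) + S i (j+1) := by
      rw [Matrix.dotProduct_mulVec, huS i hi hip]
      simp [hS, add_dotProduct, smul_dotProduct, smul_eq_mul]
    have := h1.symm.trans h2
    exact add_left_cancel this
  -- case i + j ≤ p : slide toward the first column
  have T1 : ∀ j i, 1 ≤ i → 1 ≤ j → i + j ≤ p → j ≤ q → S i j = 0 := by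
    intro j
    induction j with
    | zero => intro i _ hj _ _; omega
    | succ j ih =>
      intro i hi hj hijp hjq
      rcases Nat.eq_zero_or_pos j with h0 | h1
      · subst h0; exact L1 i hi (by omega)
      · rw [← exch i j hi (by omega) h1 hjq]
        exact ih (i+1) (by omega) h1 (by omega) (by omega)
  -- case i + j ≤ q : slide toward the first row
  have T2 : ∀ i j, 1 ≤ i → 1 ≤ j → i + j ≤ q → i ≤ p → S i j = 0 := by
    intro i
    induction i with
    | zero => intro j hi _ _ _; omega
    | succ i ih =>
      intro j hj hi hijq hip
      rcases Nat.eq_zero_or_pos i with h0 | h1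
      · subst h0; exact L2 j hi (by omega)
      · rw [exch i j h1 hip hi (by omega)]
        exact ih (j+1) h1 (by omega) (by omega) (by omega)
  intro i j hi hipp hj hjq hmax
  rcases le_or_gt (i + j) p with h | h
  · exact T1 j i hi hj h hjq
  · exact T2 i j hi hj (by omega) hipp
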